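/- Assume N ≥ 5, M ≥ 5, and let W = {(i,j) ∈ V : i₀ ≤ i < i₀ + N₁, j₀ ≤ j < j₀ + M₁} (indices taken modulo N and M) be a rectangular set of nodes frozen at cooperation, where N₁ ∈ [2, N−3] ∪ {N} and M₁ ∈ [2, M−3] ∪ {M} are integers. Assume that either (i) p3 > p1 > p4 > p2 and 2p1 + 2p2 > p3 + 3p4, or (ii) p3 > p1 > p2 > p4 and 2p3 + 2p4 > 2p1 + 2p2 > p3 + 3p4 > 4p2. Let S* be the configuration with S*(v) = C for v ∈ W and S*(v) = D for v ∉ W. Then the singleton {S_C} is reachable from S* under the W-frozen CEG within ⌈(N − N₁)/2⌉ + ⌈(M − M₁)/2⌉ steps. -/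

import Mathlib

open MeasureTheory

namespace EvolGame

/-- A strategy: cooperation `C` or defection `D`. -/
inductive Strat : Type
  | C : Strat
  | D : Strat
  deriving DecidableEq

/-- Node set of the toroidal grid `G_{N,M}`. -/
abbrev Node (N M : ℕ) := ZMod N × ZMod M

/-- A strategy configuration. -/
abbrev Config (N M : ℕ) := Node N M → Strat

/-- Adjacency on the toroidal grid. -/
def adj {N M : ℕ} (u v : Node N M) : Prop :=
  u - v = (1, 0) ∨ u - v = (-1, 0) ∨ u - v = (0, 1) ∨ u - v = (0, -1)

/-- The (at most four) neighbors of a node. -/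
def neighbors {N M : ℕ} (v : Node N M) : Finset (Node N M) :=
  {v + (1, 0), v + (-1, 0), v + (0, 1), v + (0, -1)}

/-- Number of cooperating neighbors of `v` under configuration `S`. -/
def coopCount {N M : ℕ} (S : Config N M) (v : Node N M) : ℕ :=
  ((neighbors v).filter (fun u => S u = Strat.C)).card

/-- Payoff of node `v` under configuration `S` with payoff parameters `p1,p2,p3,p4`. -/
def payoff (p1 p2 p3 p4 : ℝ) {N M : ℕ} (S : Config N M) (v : Node N M) : ℝ :=
  if S v = Strat.C then
    (coopCount S v : ℝ) * p1 + (4 - (coopCount S v : ℝ)) * p2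
  else
    (coopCount S v : ℝ) * p3 + (4 - (coopCount S v : ℝ)) * p4

/-- A control assigns to each node one of its neighbors. -/
def IsControl {N M : ℕ} (c : Node N M → Node N M) : Prop :=
  ∀ v, adj (c v) v

open Classical in
/-- The controlled update `F(S,c)`. -/
noncomputable def F (p1 p2 p3 p4 : ℝ) {N M : ℕ} (S : Config N M)
    (c : Node N M → Node N M) : Config N M :=
  fun v =>
    if payoff p1 p2 p3 p4 S v < payoff p1 p2 p3 p4 S (c v) then S (c v) else S v

/-- The set `R(S)` of configurations reachable from `S` in one imitation step. -/
def Rset (p1 p2 p3 p4 : ℝ) {N M : ℕ} (S : Config N M) : Set (Config N M) :=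
  {S' | ∀ v, S' v = S v ∨
    ∃ u, adj u v ∧ S' v = S u ∧ payoff p1 p2 p3 p4 S v < payoff p1 p2 p3 p4 S u}

/-- `Ω*`: adjacent nodes with different strategies have equal payoffs. -/
def OmegaStar (p1 p2 p3 p4 : ℝ) (N M : ℕ) : Set (Config N M) :=
  {S | ∀ u v, adj u v → S u ≠ S v →
    payoff p1 p2 p3 p4 S u = payoff p1 p2 p3 p4 S v}

/-- Controlled trajectory of the CEG. -/
noncomputable def traj (p1 p2 p3 p4 : ℝ) {N M : ℕ} (S0 : Config N M)
    (c : ℕ → Node N M → Node N M) : ℕ → Config N M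
  | 0 => S0
  | t + 1 => F p1 p2 p3 p4 (traj p1 p2 p3 p4 S0 c t) (c t)

/-- `A` is reachable from `S0` under the CEG within `T` steps. -/
def ReachableWithin (p1 p2 p3 p4 : ℝ) {N M : ℕ} (A : Set (Config N M))
    (S0 : Config N M) (T : ℕ) : Prop :=
  ∃ t ≤ T, ∃ c : ℕ → Node N M → Node N M,
    (∀ s, IsControl (c s)) ∧ traj p1 p2 p3 p4 S0 c t ∈ A

/-- The discrete σ-algebra on the finite configuration space. -/
instance {N M : ℕ} : MeasurableSpace (Config N M) := ⊤

/-- `μ` is the law of the time-homogeneous Markov chain with kernel `κ` started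
at `S0`, characterized by its finite-dimensional (cylinder) distributions. -/
def IsChainLaw {N M : ℕ} (κ : Config N M → PMF (Config N M)) (S0 : Config N M)
    (μ : Measure (ℕ → Config N M)) : Prop :=
  IsProbabilityMeasure μ ∧
  ∀ (t : ℕ) (s : ℕ → Config N M), s 0 = S0 →
    μ {ω | ∀ i ≤ t, ω i = s i} = ∏ i ∈ Finset.range t, κ (s i) (s (i + 1))

/-- An admissible imitation kernel with margin `ε`. -/
def IsAdmissible (p1 p2 p3 p4 : ℝ) {N M : ℕ} (ε : ℝ)
    (κ : Config N M → PMF (Config N M)) : Prop :=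
  (∀ (S : Config N M) (c : Node N M → Node N M), IsControl c →
      ENNReal.ofReal ε ≤ κ S (F p1 p2 p3 p4 S c)) ∧
  (∀ S : Config N M, ∑' S' : Rset p1 p2 p3 p4 S, κ S (S' : Config N M) = 1)

open Classical in
/-- The `W`-frozen controlled update. -/
noncomputable def FW (p1 p2 p3 p4 : ℝ) {N M : ℕ} (W : Set (Node N M))
    (S : Config N M) (c : Node N M → Node N M) : Config N M :=
  fun v => if v ∈ W then S v else F p1 p2 p3 p4 S c v

/-- The `W`-frozen one-step reach set `R_W(S)`. -/
def RsetW (p1 p2 p3 p4 : ℝ) {N M : ℕ} (W : Set (Node N M)) (S : Config N M) :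
    Set (Config N M) :=
  {S' | (∀ v ∈ W, S' v = S v) ∧
    ∀ v ∉ W, S' v = S v ∨
      ∃ u, adj u v ∧ S' v = S u ∧ payoff p1 p2 p3 p4 S v < payoff p1 p2 p3 p4 S u}

/-- Controlled trajectory of the `W`-frozen CEG. -/
noncomputable def trajW (p1 p2 p3 p4 : ℝ) {N M : ℕ} (W : Set (Node N M))
    (S0 : Config N M) (c : ℕ → Node N M → Node N M) : ℕ → Config N M
  | 0 => S0
  | t + 1 => FW p1 p2 p3 p4 W (trajW p1 p2 p3 p4 W S0 c t) (c t)

/-- `A` is reachable from `S0` under the `W`-frozen CEG within `T` steps. -/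
def ReachableWithinW (p1 p2 p3 p4 : ℝ) {N M : ℕ} (W : Set (Node N M))
    (A : Set (Config N M)) (S0 : Config N M) (T : ℕ) : Prop :=
  ∃ t ≤ T, ∃ c : ℕ → Node N M → Node N M,
    (∀ s, IsControl (c s)) ∧ trajW p1 p2 p3 p4 W S0 c t ∈ A

/-- A `W`-frozen admissible imitation kernel with margin `ε`. -/
def IsAdmissibleW (p1 p2 p3 p4 : ℝ) {N M : ℕ} (W : Set (Node N M)) (ε : ℝ)
    (κ : Config N M → PMF (Config N M)) : Prop :=
  (∀ (S : Config N M) (c : Node N M → Node N M), IsControl c →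
      ENNReal.ofReal ε ≤ κ S (FW p1 p2 p3 p4 W S c)) ∧
  (∀ S : Config N M, ∑' S' : RsetW p1 p2 p3 p4 W S, κ S (S' : Config N M) = 1)


section Aux

variable {N M : ℕ}

private lemma adj_add (v e : Node N M)
    (he : e = (1, 0) ∨ e = (-1, 0) ∨ e = (0, 1) ∨ e = (0, -1)) :
    adj (v + e) v := by
  have h : v + e - v = e := by rw [add_comm, add_sub_cancel_right]
  unfold adj
  rw [h]
  exact he

private lemma mod_pred {x n : ℕ} (h1 : 1 ≤ x) (h2 : x < n) : (x + (n - 1)) % n = x - 1 := by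
  have h : x + (n - 1) = (x - 1) + n := by omega
  rw [h, Nat.add_mod_right, Nat.mod_eq_of_lt (by omega)]

private lemma zmod_val_add_one {n : ℕ} [NeZero n] (hn : 2 ≤ n) (a b : ZMod n) :
    (a + 1 - b).val = ((a - b).val + 1) % n := by
  rw [show a + 1 - b = (a - b) + 1 by ring, ZMod.val_add, ZMod.val_one'' (by omega)]

private lemma zmod_val_sub_one {n : ℕ} [NeZero n] (hn : 2 ≤ n) (a b : ZMod n) :
    (a - 1 - b).val = ((a - b).val + (n - 1)) % n := by
  have h : ((n - 1 : ℕ) : ZMod n) = -1 := by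
    have h0 : ((n : ℕ) : ZMod n) = 0 := ZMod.natCast_self n
    rw [Nat.cast_sub (by omega), h0, Nat.cast_one]; ring
  rw [show a - 1 - b = (a - b) + ((n - 1 : ℕ) : ZMod n) by rw [h]; ring,
    ZMod.val_add, ZMod.val_natCast_of_lt (by omega)]

/-- Evaluation of `coopCount` as a sum of four indicators. -/
private lemma coopCount_eq [NeZero N] [NeZero M] (hN : 3 ≤ N) (hM : 3 ≤ M)
    (S : Config N M) (v : Node N M) :
    coopCount S v =
      (if S (v + (1, 0)) = Strat.C then 1 else 0) +
      (if S (v + (-1, 0)) = Strat.C then 1 else 0) +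
      (if S (v + (0, 1)) = Strat.C then 1 else 0) +
      (if S (v + (0, -1)) = Strat.C then 1 else 0) := by
  classical
  have h2N : (2 : ZMod N) ≠ 0 := by
    have : ¬ ((2 : ℕ) : ZMod N) = 0 := by
      rw [ZMod.natCast_eq_zero_iff]
      intro h; have := Nat.le_of_dvd (by norm_num) h; omega
    simpa using this
  have h2M : (2 : ZMod M) ≠ 0 := by
    have : ¬ ((2 : ℕ) : ZMod M) = 0 := by
      rw [ZMod.natCast_eq_zero_iff]
      intro h; have := Nat.le_of_dvd (by norm_num) h; omega
    simpa using this
  have h1N : (1 : ZMod N) ≠ 0 := by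
    have : ¬ ((1 : ℕ) : ZMod N) = 0 := by
      rw [ZMod.natCast_eq_zero_iff]
      intro h; have := Nat.le_of_dvd (by norm_num) h; omega
    simpa using this
  have h1M : (1 : ZMod M) ≠ 0 := by
    have : ¬ ((1 : ℕ) : ZMod M) = 0 := by
      rw [ZMod.natCast_eq_zero_iff]
      intro h; have := Nat.le_of_dvd (by norm_num) h; omega
    simpa using this
  have hab : v + ((1 : ZMod N), (0 : ZMod M)) ≠ v + (-1, 0) := by
    intro h
    have h1 : ((1 : ZMod N), (0 : ZMod M)) = (-1, 0) := add_left_cancel h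
    have h2 : (1 : ZMod N) = -1 := congrArg Prod.fst h1
    exact h2N (by linear_combination h2)
  have hac : v + ((1 : ZMod N), (0 : ZMod M)) ≠ v + (0, 1) := by
    intro h
    have h1 : ((1 : ZMod N), (0 : ZMod M)) = (0, 1) := add_left_cancel h
    exact h1N (congrArg Prod.fst h1)
  have had : v + ((1 : ZMod N), (0 : ZMod M)) ≠ v + (0, -1) := by
    intro h
    have h1 : ((1 : ZMod N), (0 : ZMod M)) = (0, -1) := add_left_cancel h
    exact h1N (congrArg Prod.fst h1)
  have hbc : v + ((-1 : ZMod N), (0 : ZMod M)) ≠ v + (0, 1) := by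
    intro h
    have h1 : ((-1 : ZMod N), (0 : ZMod M)) = (0, 1) := add_left_cancel h
    have h2 : (-1 : ZMod N) = 0 := congrArg Prod.fst h1
    exact h1N (by linear_combination -h2)
  have hbd : v + ((-1 : ZMod N), (0 : ZMod M)) ≠ v + (0, -1) := by
    intro h
    have h1 : ((-1 : ZMod N), (0 : ZMod M)) = (0, -1) := add_left_cancel h
    have h2 : (-1 : ZMod N) = 0 := congrArg Prod.fst h1
    exact h1N (by linear_combination -h2)
  have hcd : v + ((0 : ZMod N), (1 : ZMod M)) ≠ v + (0, -1) := by
    intro h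
    have h1 : ((0 : ZMod N), (1 : ZMod M)) = (0, -1) := add_left_cancel h
    have h2 : (1 : ZMod M) = -1 := congrArg Prod.snd h1
    exact h2M (by linear_combination h2)
  rw [coopCount, neighbors, Finset.card_filter,
    Finset.sum_insert (by simp [hab, hac, had]),
    Finset.sum_insert (by simp [hbc, hbd]),
    Finset.sum_insert (by simp [hcd]),
    Finset.sum_singleton]
  ring

private lemma coopCount_le_four [NeZero N] [NeZero M] (hN : 3 ≤ N) (hM : 3 ≤ M)
    (S : Config N M) (v : Node N M) : coopCount S v ≤ 4 := by
  rw [coopCount_eq hN hM]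
  split_ifs <;> omega

private lemma payoff_D_one {p1 p2 p3 p4 : ℝ} {S : Config N M} {v : Node N M}
    (hv : S v = Strat.D) (hk : coopCount S v = 1) :
    payoff p1 p2 p3 p4 S v = p3 + 3 * p4 := by
  rw [payoff, if_neg (by simp [hv]), hk]
  norm_num

private lemma payoff_C_ge {p1 p2 p3 p4 : ℝ} (hp12 : p2 < p1) {S : Config N M} {v : Node N M}
    (hv : S v = Strat.C) (hk2 : 2 ≤ coopCount S v) (hk4 : coopCount S v ≤ 4) :
    2 * p1 + 2 * p2 ≤ payoff p1 p2 p3 p4 S v := by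
  rw [payoff, if_pos hv]
  have h2 : (2 : ℝ) ≤ (coopCount S v : ℝ) := by exact_mod_cast hk2
  have h4 : ((coopCount S v : ℝ)) ≤ 4 := by exact_mod_cast hk4
  nlinarith

private lemma reach_of_mem {p1 p2 p3 p4 : ℝ} {W : Set (Node N M)} {A : Set (Config N M)}
    {S0 : Config N M} {T : ℕ} (h : S0 ∈ A) :
    ReachableWithinW p1 p2 p3 p4 W A S0 T :=
  ⟨0, Nat.zero_le _, fun _ v => v + (1, 0), fun _ v => adj_add v _ (Or.inl rfl), h⟩

private lemma reach_step {p1 p2 p3 p4 : ℝ} {W : Set (Node N M)} {A : Set (Config N M)}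
    {S0 S1 : Config N M} {T : ℕ}
    (c0 : Node N M → Node N M) (hc0 : IsControl c0)
    (h1 : FW p1 p2 p3 p4 W S0 c0 = S1)
    (h : ReachableWithinW p1 p2 p3 p4 W A S1 T) :
    ReachableWithinW p1 p2 p3 p4 W A S0 (T + 1) := by
  obtain ⟨t, ht, c, hc, hA⟩ := h
  refine ⟨t + 1, by omega, fun s => if s = 0 then c0 else c (s - 1), fun s => ?_, ?_⟩
  · dsimp only; split
    · exact hc0
    · exact hc _
  · have key : ∀ u, trajW p1 p2 p3 p4 W S0 (fun s => if s = 0 then c0 else c (s - 1)) (u + 1)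
        = trajW p1 p2 p3 p4 W S1 c u := by
      intro u
      induction u with
      | zero =>
        show FW p1 p2 p3 p4 W (trajW p1 p2 p3 p4 W S0 _ 0) _ = S1
        exact h1
      | succ u ih =>
        show FW p1 p2 p3 p4 W (trajW p1 p2 p3 p4 W S0 _ (u + 1)) _ = _
        rw [ih]
        show FW p1 p2 p3 p4 W _ (if u + 1 = 0 then c0 else c (u + 1 - 1)) = _
        simp only [Nat.succ_ne_zero, if_false, Nat.add_sub_cancel]
        rfl
    rw [key t]
    exact hA

end Aux

set_option linter.unusedSectionVars false

section Aux2

variable {N M : ℕ}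

/-- The rectangle-type configuration: `C` iff `x < A ∨ B ≤ x` and `y < A' ∨ B' ≤ y`,
where `x, y` are the coordinates relative to `(i0, j0)`. -/
private def CfgR (i0 : ZMod N) (j0 : ZMod M) (A B A' B' : ℕ) : Config N M :=
  fun v =>
    if ((v.1 - i0).val < A ∨ B ≤ (v.1 - i0).val) ∧
        ((v.2 - j0).val < A' ∨ B' ≤ (v.2 - j0).val) then Strat.C else Strat.D

private lemma CfgR_eq_C {i0 : ZMod N} {j0 : ZMod M} {A B A' B' : ℕ} {v : Node N M} :
    CfgR i0 j0 A B A' B' v = Strat.C ↔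
      (((v.1 - i0).val < A ∨ B ≤ (v.1 - i0).val) ∧
        ((v.2 - j0).val < A' ∨ B' ≤ (v.2 - j0).val)) := by
  unfold CfgR; split <;> simp_all

private lemma CfgR_eq_D {i0 : ZMod N} {j0 : ZMod M} {A B A' B' : ℕ} {v : Node N M} :
    CfgR i0 j0 A B A' B' v = Strat.D ↔
      ¬ (((v.1 - i0).val < A ∨ B ≤ (v.1 - i0).val) ∧
        ((v.2 - j0).val < A' ∨ B' ≤ (v.2 - j0).val)) := by
  unfold CfgR; split <;> simp_all

private lemma CfgR_rows_full {i0 : ZMod N} {j0 : ZMod M} {A B A' B' : ℕ} [NeZero N]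
    (h : ∀ x, x < N → (x < A ∨ B ≤ x)) :
    CfgR (N := N) (M := M) i0 j0 A B A' B' = CfgR i0 j0 N N A' B' := by
  funext v
  by_cases hc : ((v.2 - j0).val < A' ∨ B' ≤ (v.2 - j0).val)
  · exact (CfgR_eq_C.mpr ⟨h _ (ZMod.val_lt _), hc⟩).trans
      (CfgR_eq_C.mpr ⟨Or.inl (ZMod.val_lt _), hc⟩).symm
  · exact (CfgR_eq_D.mpr fun hh => hc hh.2).trans
      (CfgR_eq_D.mpr fun hh => hc hh.2).symm

private lemma CfgR_all {i0 : ZMod N} {j0 : ZMod M} {A B A' B' : ℕ} [NeZero N] [NeZero M]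
    (hx : ∀ x, x < N → (x < A ∨ B ≤ x)) (hy : ∀ y, y < M → (y < A' ∨ B' ≤ y)) :
    CfgR (N := N) (M := M) i0 j0 A B A' B' = (fun _ => Strat.C) := by
  funext v
  exact CfgR_eq_C.mpr ⟨hx _ (ZMod.val_lt _), hy _ (ZMod.val_lt _)⟩

section Coords
variable [NeZero N] [NeZero M] (i0 : ZMod N) (j0 : ZMod M) (v : Node N M)

private lemma xR (hN : 2 ≤ N) :
    ((v + ((1 : ZMod N), (0 : ZMod M))).1 - i0).val = ((v.1 - i0).val + 1) % N := by
  rw [Prod.fst_add]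
  exact zmod_val_add_one hN v.1 i0

private lemma yR : ((v + ((1 : ZMod N), (0 : ZMod M))).2 - j0).val = (v.2 - j0).val := by
  rw [Prod.snd_add]; norm_num

private lemma xL (hN : 2 ≤ N) :
    ((v + ((-1 : ZMod N), (0 : ZMod M))).1 - i0).val = ((v.1 - i0).val + (N - 1)) % N := by
  rw [Prod.fst_add]
  have := zmod_val_sub_one hN v.1 i0
  rw [← this]; ring_nf

private lemma yL : ((v + ((-1 : ZMod N), (0 : ZMod M))).2 - j0).val = (v.2 - j0).val := by
  rw [Prod.snd_add]; norm_num

private lemma xU : ((v + ((0 : ZMod N), (1 : ZMod M))).1 - i0).val = (v.1 - i0).val := by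
  rw [Prod.fst_add]; norm_num

private lemma yU (hM : 2 ≤ M) :
    ((v + ((0 : ZMod N), (1 : ZMod M))).2 - j0).val = ((v.2 - j0).val + 1) % M := by
  rw [Prod.snd_add]
  exact zmod_val_add_one hM v.2 j0

private lemma xD : ((v + ((0 : ZMod N), (-1 : ZMod M))).1 - i0).val = (v.1 - i0).val := by
  rw [Prod.fst_add]; norm_num

private lemma yD (hM : 2 ≤ M) :
    ((v + ((0 : ZMod N), (-1 : ZMod M))).2 - j0).val = ((v.2 - j0).val + (M - 1)) % M := by
  rw [Prod.snd_add]
  have := zmod_val_sub_one hM v.2 j0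
  rw [← this]; ring_nf

end Coords

end Aux2

section Aux3

variable {N M : ℕ}

/-- Control used in the column-growing phase. -/
private def ctrl2 (j0 : ZMod M) (A B dr dl : ℕ) : Node N M → Node N M := fun v =>
  if (v.2 - j0).val < A ∨ B ≤ (v.2 - j0).val then v + (1, 0)
  else if dr = 1 ∧ (v.2 - j0).val = A then v + (0, -1)
  else if dl = 1 ∧ (v.2 - j0).val = B - 1 then v + (0, 1)
  else v + (1, 0)

private lemma step2 [NeZero N] [NeZero M] (hN : 5 ≤ N) (hM : 5 ≤ M)
    {p1 p2 p3 p4 : ℝ} (hp12 : p2 < p1) (hp : p3 + 3 * p4 < 2 * p1 + 2 * p2)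
    (i0 : ZMod N) (j0 : ZMod M) (W : Set (Node N M)) (M1 : ℕ)
    (hWsub : ∀ v ∈ W, (v.2 - j0).val < M1)
    (hM1 : 2 ≤ M1) (r l dr dl : ℕ) (hdr : dr ≤ 1) (hdl : dl ≤ 1)
    (hgap : M1 + r + l + 2 ≤ M) :
    ∃ c, IsControl c ∧
      FW p1 p2 p3 p4 W (CfgR i0 j0 N N (M1 + r) (M - l)) c
        = CfgR i0 j0 N N (M1 + r + dr) (M - (l + dl)) := by
  classical
  have hM2 : 2 ≤ M := by omega
  have hN3 : 3 ≤ N := by omega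
  have hM3 : 3 ≤ M := by omega
  set S := CfgR (N := N) (M := M) i0 j0 N N (M1 + r) (M - l) with hSdef
  have hSfun : ∀ u : Node N M,
      S u = if (u.2 - j0).val < M1 + r ∨ M - l ≤ (u.2 - j0).val then Strat.C else Strat.D := by
    intro u
    by_cases hc : (u.2 - j0).val < M1 + r ∨ M - l ≤ (u.2 - j0).val
    · rw [if_pos hc]; exact CfgR_eq_C.mpr ⟨Or.inl (ZMod.val_lt _), hc⟩
    · rw [if_neg hc]; exact CfgR_eq_D.mpr fun hh => hc hh.2
  have hvert : ∀ u : Node N M, S (u + (1, 0)) = S u := by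
    intro u; rw [hSfun, hSfun, yR]
  have hvert' : ∀ u : Node N M, S (u + (-1, 0)) = S u := by
    intro u; rw [hSfun, hSfun, yL]
  refine ⟨ctrl2 j0 (M1 + r) (M - l) dr dl, ?_, ?_⟩
  · intro v; simp only [ctrl2]
    split_ifs
    exacts [adj_add _ _ (Or.inl rfl), adj_add _ _ (Or.inr (Or.inr (Or.inr rfl))),
      adj_add _ _ (Or.inr (Or.inr (Or.inl rfl))), adj_add _ _ (Or.inl rfl)]
  funext v
  have hyM : (v.2 - j0).val < M := ZMod.val_lt _
  show FW p1 p2 p3 p4 W S (ctrl2 j0 (M1 + r) (M - l) dr dl) v = _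
  unfold FW
  by_cases hvW : v ∈ W
  · rw [if_pos hvW]
    have hy1 : (v.2 - j0).val < M1 := hWsub v hvW
    rw [hSfun, if_pos (Or.inl (by omega))]
    exact (CfgR_eq_C.mpr ⟨Or.inl (ZMod.val_lt _), Or.inl (by omega)⟩).symm
  rw [if_neg hvW]
  show (if payoff p1 p2 p3 p4 S v < payoff p1 p2 p3 p4 S (ctrl2 j0 (M1 + r) (M - l) dr dl v)
      then S (ctrl2 j0 (M1 + r) (M - l) dr dl v) else S v) = _
  by_cases hyC : (v.2 - j0).val < M1 + r ∨ M - l ≤ (v.2 - j0).val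
  · -- v is a cooperator: nothing changes
    have hcv : ctrl2 j0 (M1 + r) (M - l) dr dl v = v + (1, 0) := by
      simp only [ctrl2]; rw [if_pos hyC]
    have h1 : S (ctrl2 j0 (M1 + r) (M - l) dr dl v) = S v := by rw [hcv]; exact hvert v
    have hSv : S v = Strat.C := by rw [hSfun]; exact if_pos hyC
    rw [h1, ite_self, hSv]
    refine (CfgR_eq_C.mpr ⟨Or.inl (ZMod.val_lt _), ?_⟩).symm
    rcases hyC with h | h
    · exact Or.inl (by omega)
    · exact Or.inr (by omega)
  by_cases hB2 : dr = 1 ∧ (v.2 - j0).val = M1 + r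
  · -- conversion at the right front
    obtain ⟨hdr1, hyA⟩ := hB2
    have hcv : ctrl2 j0 (M1 + r) (M - l) dr dl v = v + (0, -1) := by
      simp only [ctrl2]; rw [if_neg hyC, if_pos ⟨hdr1, hyA⟩]
    have hSv : S v = Strat.D := by rw [hSfun]; exact if_neg hyC
    have hyD1 : ((v + ((0 : ZMod N), (-1 : ZMod M))).2 - j0).val = (v.2 - j0).val - 1 := by
      rw [yD j0 v hM2, mod_pred (by omega) hyM]
    have hu : S (v + (0, -1)) = Strat.C := by
      rw [hSfun, hyD1, if_pos (Or.inl (by omega))]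
    have hup : S (v + (0, 1)) = Strat.D := by
      have h1 : ((v + ((0 : ZMod N), (1 : ZMod M))).2 - j0).val = (v.2 - j0).val + 1 := by
        rw [yU j0 v hM2, Nat.mod_eq_of_lt (by omega)]
      rw [hSfun, h1, if_neg (by omega)]
    have hk : coopCount S v = 1 := by
      rw [coopCount_eq hN3 hM3 S v, hvert v, hvert' v, hSv, hup, hu]
      simp
    have huv1 : S ((v + (0, -1)) + (1, 0)) = Strat.C := by rw [hvert]; exact hu
    have huv2 : S ((v + (0, -1)) + (-1, 0)) = Strat.C := by rw [hvert']; exact hu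
    have hk2 : 2 ≤ coopCount S (v + (0, -1)) := by
      rw [coopCount_eq hN3 hM3, huv1, huv2]
      split_ifs <;> first | omega | (exact absurd rfl (by assumption))
    have hpv : payoff p1 p2 p3 p4 S v = p3 + 3 * p4 := payoff_D_one hSv hk
    have hpu : 2 * p1 + 2 * p2 ≤ payoff p1 p2 p3 p4 S (v + (0, -1)) :=
      payoff_C_ge hp12 hu hk2 (coopCount_le_four hN3 hM3 S _)
    rw [hcv, if_pos (by rw [hpv]; linarith), hu]
    exact (CfgR_eq_C.mpr ⟨Or.inl (ZMod.val_lt _), Or.inl (by omega)⟩).symm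
  by_cases hC3 : dl = 1 ∧ (v.2 - j0).val = M - l - 1
  · -- conversion at the left front
    obtain ⟨hdl1, hyB⟩ := hC3
    have hcv : ctrl2 j0 (M1 + r) (M - l) dr dl v = v + (0, 1) := by
      simp only [ctrl2]; rw [if_neg hyC, if_neg hB2, if_pos ⟨hdl1, hyB⟩]
    have hSv : S v = Strat.D := by rw [hSfun]; exact if_neg hyC
    have hu : S (v + (0, 1)) = Strat.C := by
      rw [hSfun, yU j0 v hM2]
      rcases Nat.eq_zero_or_pos l with hl | hl
      · have h0 : ((v.2 - j0).val + 1) % M = 0 := by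
          rw [show (v.2 - j0).val + 1 = M by omega, Nat.mod_self]
        rw [h0]; exact if_pos (Or.inl (by omega))
      · have h0 : ((v.2 - j0).val + 1) % M = (v.2 - j0).val + 1 :=
          Nat.mod_eq_of_lt (by omega)
        rw [h0]; exact if_pos (Or.inr (by omega))
    have hdn : S (v + (0, -1)) = Strat.D := by
      have h1 : ((v + ((0 : ZMod N), (-1 : ZMod M))).2 - j0).val = (v.2 - j0).val - 1 := by
        rw [yD j0 v hM2, mod_pred (by omega) hyM]
      rw [hSfun, h1, if_neg (by omega)]
    have hk : coopCount S v = 1 := by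
      rw [coopCount_eq hN3 hM3 S v, hvert v, hvert' v, hSv, hu, hdn]
      simp
    have huv1 : S ((v + (0, 1)) + (1, 0)) = Strat.C := by rw [hvert]; exact hu
    have huv2 : S ((v + (0, 1)) + (-1, 0)) = Strat.C := by rw [hvert']; exact hu
    have hk2 : 2 ≤ coopCount S (v + (0, 1)) := by
      rw [coopCount_eq hN3 hM3, huv1, huv2]
      split_ifs <;> first | omega | (exact absurd rfl (by assumption))
    have hpv : payoff p1 p2 p3 p4 S v = p3 + 3 * p4 := payoff_D_one hSv hk
    have hpu : 2 * p1 + 2 * p2 ≤ payoff p1 p2 p3 p4 S (v + (0, 1)) :=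
      payoff_C_ge hp12 hu hk2 (coopCount_le_four hN3 hM3 S _)
    rw [hcv, if_pos (by rw [hpv]; linarith), hu]
    exact (CfgR_eq_C.mpr ⟨Or.inl (ZMod.val_lt _), Or.inr (by omega)⟩).symm
  · -- remaining defectors: nothing changes
    have hcv : ctrl2 j0 (M1 + r) (M - l) dr dl v = v + (1, 0) := by
      simp only [ctrl2]; rw [if_neg hyC, if_neg hB2, if_neg hC3]
    have h1 : S (ctrl2 j0 (M1 + r) (M - l) dr dl v) = S v := by rw [hcv]; exact hvert v
    have hSv : S v = Strat.D := by rw [hSfun]; exact if_neg hyC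
    rw [h1, ite_self, hSv]
    exact (CfgR_eq_D.mpr fun hh => by rcases hh with ⟨_, h2⟩; omega).symm

end Aux3

section Aux4

variable {N M : ℕ}

/-- Control used in the row-growing phase. -/
private def ctrl1 (i0 : ZMod N) (j0 : ZMod M) (A B M1 dr dl : ℕ) : Node N M → Node N M :=
  fun v =>
  if ((v.1 - i0).val < A ∨ B ≤ (v.1 - i0).val) ∧ (v.2 - j0).val < M1 then
    (if (v.2 - j0).val + 1 < M1 then v + (0, 1) else v + (0, -1))
  else if dr = 1 ∧ (v.1 - i0).val = A ∧ (v.2 - j0).val < M1 then v + (-1, 0)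
  else if dl = 1 ∧ (v.1 - i0).val = B - 1 ∧ (v.2 - j0).val < M1 then v + (1, 0)
  else if (v.2 - j0).val < M1 then v + (0, 1)
  else v + (1, 0)

private lemma step1 [NeZero N] [NeZero M] (hN : 5 ≤ N) (hM : 5 ≤ M)
    {p1 p2 p3 p4 : ℝ} (hp12 : p2 < p1) (hp : p3 + 3 * p4 < 2 * p1 + 2 * p2)
    (i0 : ZMod N) (j0 : ZMod M) (W : Set (Node N M)) (N1 M1 : ℕ)
    (hWsub : ∀ v ∈ W, (v.1 - i0).val < N1 ∧ (v.2 - j0).val < M1)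
    (hN1 : 2 ≤ N1) (hM1 : 2 ≤ M1) (hM1M : M1 ≤ M)
    (r l dr dl : ℕ) (hdr : dr ≤ 1) (hdl : dl ≤ 1)
    (hgap : N1 + r + l + 2 ≤ N) :
    ∃ c, IsControl c ∧
      FW p1 p2 p3 p4 W (CfgR i0 j0 (N1 + r) (N - l) M1 M) c
        = CfgR i0 j0 (N1 + r + dr) (N - (l + dl)) M1 M := by
  classical
  have hN2 : 2 ≤ N := by omega
  have hM2 : 2 ≤ M := by omega
  have hN3 : 3 ≤ N := by omega
  have hM3 : 3 ≤ M := by omega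
  set S := CfgR (N := N) (M := M) i0 j0 (N1 + r) (N - l) M1 M with hSdef
  have hSfun : ∀ u : Node N M,
      S u = if ((u.1 - i0).val < N1 + r ∨ N - l ≤ (u.1 - i0).val) ∧ (u.2 - j0).val < M1
        then Strat.C else Strat.D := by
    intro u
    by_cases hc : ((u.1 - i0).val < N1 + r ∨ N - l ≤ (u.1 - i0).val) ∧ (u.2 - j0).val < M1
    · rw [if_pos hc]; exact CfgR_eq_C.mpr ⟨hc.1, Or.inl hc.2⟩
    · rw [if_neg hc]
      refine CfgR_eq_D.mpr fun hh => hc ⟨hh.1, ?_⟩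
      rcases hh.2 with h | h
      · exact h
      · exact absurd h (by have := ZMod.val_lt (u.2 - j0); omega)
  have hhorC : ∀ u : Node N M, S u = Strat.C →
      (((u.2 - j0).val + 1 < M1 → S (u + (0, 1)) = Strat.C) ∧
        (¬ ((u.2 - j0).val + 1 < M1) → S (u + (0, -1)) = Strat.C)) := by
    intro u hu
    have hcond : ((u.1 - i0).val < N1 + r ∨ N - l ≤ (u.1 - i0).val) ∧ (u.2 - j0).val < M1 := by
      rw [hSfun] at hu
      by_contra h
      rw [if_neg h] at hu
      simp at hu
    constructor
    · intro h
      rw [hSfun, xU, yU j0 u hM2, Nat.mod_eq_of_lt (by omega)]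
      exact if_pos ⟨hcond.1, by omega⟩
    · intro h
      rw [hSfun, xD, yD j0 u hM2, mod_pred (by omega) (ZMod.val_lt _)]
      exact if_pos ⟨hcond.1, by omega⟩
  have hhorD1 : ∀ u : Node N M, ¬ ((u.1 - i0).val < N1 + r ∨ N - l ≤ (u.1 - i0).val) →
      S (u + (0, 1)) = Strat.D := by
    intro u hx
    rw [hSfun, xU]
    exact if_neg fun hh => hx hh.1
  have hhorD2 : ∀ u : Node N M, ¬ ((u.1 - i0).val < N1 + r ∨ N - l ≤ (u.1 - i0).val) →
      S (u + (0, -1)) = Strat.D := by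
    intro u hx
    rw [hSfun, xD]
    exact if_neg fun hh => hx hh.1
  have hk2C : ∀ u : Node N M, S u = Strat.C →
      (S (u + (1, 0)) = Strat.C ∨ S (u + (-1, 0)) = Strat.C) → 2 ≤ coopCount S u := by
    intro u hu hv
    have h2 := hhorC u hu
    by_cases hy1 : (u.2 - j0).val + 1 < M1
    · have h3 := h2.1 hy1
      rcases hv with h | h <;>
        · rw [coopCount_eq hN3 hM3, h, h3]
          split_ifs <;> first | omega | (exact absurd rfl (by assumption))
    · have h3 := h2.2 hy1
      rcases hv with h | h <;>
        · rw [coopCount_eq hN3 hM3, h, h3]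
          split_ifs <;> first | omega | (exact absurd rfl (by assumption))
  refine ⟨ctrl1 i0 j0 (N1 + r) (N - l) M1 dr dl, ?_, ?_⟩
  · intro v; simp only [ctrl1]
    split_ifs
    exacts [adj_add _ _ (Or.inr (Or.inr (Or.inl rfl))),
      adj_add _ _ (Or.inr (Or.inr (Or.inr rfl))),
      adj_add _ _ (Or.inr (Or.inl rfl)),
      adj_add _ _ (Or.inl rfl),
      adj_add _ _ (Or.inr (Or.inr (Or.inl rfl))),
      adj_add _ _ (Or.inl rfl)]
  funext v
  have hxN : (v.1 - i0).val < N := ZMod.val_lt _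
  have hyM : (v.2 - j0).val < M := ZMod.val_lt _
  show FW p1 p2 p3 p4 W S (ctrl1 i0 j0 (N1 + r) (N - l) M1 dr dl) v = _
  unfold FW
  by_cases hvW : v ∈ W
  · rw [if_pos hvW]
    obtain ⟨hw1, hw2⟩ := hWsub v hvW
    rw [hSfun, if_pos ⟨Or.inl (by omega), hw2⟩]
    exact (CfgR_eq_C.mpr ⟨Or.inl (by omega), Or.inl hw2⟩).symm
  rw [if_neg hvW]
  show (if payoff p1 p2 p3 p4 S v <
        payoff p1 p2 p3 p4 S (ctrl1 i0 j0 (N1 + r) (N - l) M1 dr dl v)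
      then S (ctrl1 i0 j0 (N1 + r) (N - l) M1 dr dl v) else S v) = _
  by_cases hC : ((v.1 - i0).val < N1 + r ∨ N - l ≤ (v.1 - i0).val) ∧ (v.2 - j0).val < M1
  · -- v is a cooperator: nothing changes
    have hSv : S v = Strat.C := by rw [hSfun]; exact if_pos hC
    have h1 : S (ctrl1 i0 j0 (N1 + r) (N - l) M1 dr dl v) = Strat.C := by
      simp only [ctrl1]; rw [if_pos hC]
      by_cases hy1 : (v.2 - j0).val + 1 < M1
      · rw [if_pos hy1]; exact (hhorC v hSv).1 hy1
      · rw [if_neg hy1]; exact (hhorC v hSv).2 hy1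
    rw [h1, hSv, ite_self]
    refine (CfgR_eq_C.mpr ⟨?_, Or.inl hC.2⟩).symm
    rcases hC.1 with h | h
    · exact Or.inl (by omega)
    · exact Or.inr (by omega)
  by_cases hB2 : dr = 1 ∧ (v.1 - i0).val = N1 + r ∧ (v.2 - j0).val < M1
  · -- conversion at the upper front
    obtain ⟨hdr1, hxA, hyM1⟩ := hB2
    have hxc : ¬ ((v.1 - i0).val < N1 + r ∨ N - l ≤ (v.1 - i0).val) :=
      fun h => hC ⟨h, hyM1⟩
    have hcv : ctrl1 i0 j0 (N1 + r) (N - l) M1 dr dl v = v + (-1, 0) := by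
      simp only [ctrl1]; rw [if_neg hC, if_pos ⟨hdr1, hxA, hyM1⟩]
    have hSv : S v = Strat.D := by rw [hSfun]; exact if_neg fun hh => hxc hh.1
    have hxu : ((v + ((-1 : ZMod N), (0 : ZMod M))).1 - i0).val = (v.1 - i0).val - 1 := by
      rw [xL i0 v hN2, mod_pred (by omega) hxN]
    have hu : S (v + (-1, 0)) = Strat.C := by
      rw [hSfun, hxu, yL]
      exact if_pos ⟨Or.inl (by omega), by omega⟩
    have hdn : S (v + (1, 0)) = Strat.D := by
      rw [hSfun, xR i0 v hN2, yR, Nat.mod_eq_of_lt (by omega)]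
      exact if_neg (by omega)
    have hk : coopCount S v = 1 := by
      rw [coopCount_eq hN3 hM3 S v, hdn, hu, hhorD1 v hxc, hhorD2 v hxc]
      simp
    have huu : S ((v + (-1, 0)) + (-1, 0)) = Strat.C := by
      rw [hSfun, xL i0 _ hN2, yL, hxu, yL, mod_pred (by omega) (by omega)]
      exact if_pos ⟨Or.inl (by omega), by omega⟩
    have hk2 : 2 ≤ coopCount S (v + (-1, 0)) := hk2C _ hu (Or.inr huu)
    have hpv : payoff p1 p2 p3 p4 S v = p3 + 3 * p4 := payoff_D_one hSv hk
    have hpu : 2 * p1 + 2 * p2 ≤ payoff p1 p2 p3 p4 S (v + (-1, 0)) :=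
      payoff_C_ge hp12 hu hk2 (coopCount_le_four hN3 hM3 S _)
    rw [hcv, if_pos (by rw [hpv]; linarith), hu]
    exact (CfgR_eq_C.mpr ⟨Or.inl (by omega), Or.inl (by omega)⟩).symm
  by_cases hC3 : dl = 1 ∧ (v.1 - i0).val = N - l - 1 ∧ (v.2 - j0).val < M1
  · -- conversion at the lower front
    obtain ⟨hdl1, hxB, hyM1⟩ := hC3
    have hxc : ¬ ((v.1 - i0).val < N1 + r ∨ N - l ≤ (v.1 - i0).val) :=
      fun h => hC ⟨h, hyM1⟩
    have hcv : ctrl1 i0 j0 (N1 + r) (N - l) M1 dr dl v = v + (1, 0) := by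
      simp only [ctrl1]; rw [if_neg hC, if_neg hB2, if_pos ⟨hdl1, hxB, hyM1⟩]
    have hSv : S v = Strat.D := by rw [hSfun]; exact if_neg fun hh => hxc hh.1
    have hu : S (v + (1, 0)) = Strat.C := by
      rw [hSfun, xR i0 v hN2, yR]
      rcases Nat.eq_zero_or_pos l with hl | hl
      · rw [show ((v.1 - i0).val + 1) % N = 0 by
          rw [show (v.1 - i0).val + 1 = N by omega]; exact Nat.mod_self N]
        exact if_pos ⟨Or.inl (by omega), by omega⟩
      · rw [Nat.mod_eq_of_lt (by omega)]
        exact if_pos ⟨Or.inr (by omega), by omega⟩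
    have hdn : S (v + (-1, 0)) = Strat.D := by
      rw [hSfun, xL i0 v hN2, yL, mod_pred (by omega) hxN]
      exact if_neg (by omega)
    have hk : coopCount S v = 1 := by
      rw [coopCount_eq hN3 hM3 S v, hdn, hu, hhorD1 v hxc, hhorD2 v hxc]
      simp
    have huu : S ((v + (1, 0)) + (1, 0)) = Strat.C := by
      rw [hSfun, xR i0 _ hN2, yR, yR, xR i0 v hN2]
      rcases Nat.lt_or_ge l 2 with hl | hl
      · rcases Nat.eq_zero_or_pos l with hl0 | hl1
        · rw [show ((v.1 - i0).val + 1) % N = 0 by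
            rw [show (v.1 - i0).val + 1 = N by omega]; exact Nat.mod_self N]
          rw [show (0 + 1) % N = 1 from Nat.mod_eq_of_lt (by omega)]
          exact if_pos ⟨Or.inl (by omega), by omega⟩
        · rw [show ((v.1 - i0).val + 1) % N = N - 1 by
            rw [Nat.mod_eq_of_lt (by omega)]; omega]
          rw [show (N - 1 + 1) % N = 0 by rw [show N - 1 + 1 = N by omega]; exact Nat.mod_self N]
          exact if_pos ⟨Or.inl (by omega), by omega⟩
      · rw [show ((v.1 - i0).val + 1) % N = (v.1 - i0).val + 1 from Nat.mod_eq_of_lt (by omega)]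
        rw [show ((v.1 - i0).val + 1 + 1) % N = (v.1 - i0).val + 2 by
          rw [Nat.mod_eq_of_lt (by omega)]]
        exact if_pos ⟨Or.inr (by omega), by omega⟩
    have hk2 : 2 ≤ coopCount S (v + (1, 0)) := hk2C _ hu (Or.inl huu)
    have hpv : payoff p1 p2 p3 p4 S v = p3 + 3 * p4 := payoff_D_one hSv hk
    have hpu : 2 * p1 + 2 * p2 ≤ payoff p1 p2 p3 p4 S (v + (1, 0)) :=
      payoff_C_ge hp12 hu hk2 (coopCount_le_four hN3 hM3 S _)
    rw [hcv, if_pos (by rw [hpv]; linarith), hu]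
    exact (CfgR_eq_C.mpr ⟨Or.inr (by omega), Or.inl (by omega)⟩).symm
  by_cases hD : (v.2 - j0).val < M1
  · -- remaining defectors in the column range: nothing changes
    have hxc : ¬ ((v.1 - i0).val < N1 + r ∨ N - l ≤ (v.1 - i0).val) :=
      fun h => hC ⟨h, hD⟩
    have hcv : ctrl1 i0 j0 (N1 + r) (N - l) M1 dr dl v = v + (0, 1) := by
      simp only [ctrl1]; rw [if_neg hC, if_neg hB2, if_neg hC3, if_pos hD]
    have hSv : S v = Strat.D := by rw [hSfun]; exact if_neg fun hh => hxc hh.1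
    rw [hcv, hhorD1 v hxc, hSv, ite_self]
    exact (CfgR_eq_D.mpr fun hh => by
      rcases hh with ⟨h1, h2⟩
      rcases h2 with h2 | h2 <;> omega).symm
  · -- defectors outside the column range: nothing changes
    have hcv : ctrl1 i0 j0 (N1 + r) (N - l) M1 dr dl v = v + (1, 0) := by
      simp only [ctrl1]; rw [if_neg hC, if_neg hB2, if_neg hC3, if_neg hD]
    have hSv : S v = Strat.D := by rw [hSfun]; exact if_neg fun hh => hD hh.2
    have h1 : S (v + (1, 0)) = Strat.D := by
      rw [hSfun, yR]; exact if_neg fun hh => hD hh.2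
    rw [hcv, h1, hSv, ite_self]
    exact (CfgR_eq_D.mpr fun hh => by
      rcases hh with ⟨h1, h2⟩
      rcases h2 with h2 | h2 <;> omega).symm

end Aux4

section Aux5

variable {N M : ℕ}

private lemma phase2 [NeZero N] [NeZero M] (hN : 5 ≤ N) (hM : 5 ≤ M)
    {p1 p2 p3 p4 : ℝ} (hp12 : p2 < p1) (hp : p3 + 3 * p4 < 2 * p1 + 2 * p2)
    (i0 : ZMod N) (j0 : ZMod M) (W : Set (Node N M)) (M1 : ℕ)
    (hWsub : ∀ v ∈ W, (v.2 - j0).val < M1) (hM1 : 2 ≤ M1) :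
    ∀ n r l, M1 + r + l ≤ M → ((M - M1 - r - l) % 2 = 0 ∨ 3 ≤ M - M1 - r - l) →
      n = (M - M1 - r - l + 1) / 2 →
      ReachableWithinW p1 p2 p3 p4 W {fun _ => Strat.C}
        (CfgR i0 j0 N N (M1 + r) (M - l)) n := by
  intro n
  induction n with
  | zero =>
    intro r l hsum hpar hn
    have h0 : M1 + r + l = M := by omega
    apply reach_of_mem
    rw [Set.mem_singleton_iff]
    exact CfgR_all (fun x hx => Or.inl hx) (fun y hy => by omega)
  | succ n ih =>
    intro r l hsum hpar hn
    by_cases h2 : (M - M1 - r - l) % 2 = 0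
    · have hg2 : 2 ≤ M - M1 - r - l := by omega
      obtain ⟨c, hc, hFW⟩ := step2 hN hM hp12 hp i0 j0 W M1 hWsub hM1 r l 1 1
        (le_refl 1) (le_refl 1) (by omega)
      refine reach_step c hc hFW ?_
      have := ih (r + 1) (l + 1) (by omega) (by omega) (by omega)
      rwa [show M1 + (r + 1) = M1 + r + 1 by omega] at this
    · have hg3 : 3 ≤ M - M1 - r - l := by omega
      obtain ⟨c, hc, hFW⟩ := step2 hN hM hp12 hp i0 j0 W M1 hWsub hM1 r l 1 0
        (le_refl 1) (by omega) (by omega)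
      rw [show l + 0 = l by omega] at hFW
      refine reach_step c hc hFW ?_
      have := ih (r + 1) l (by omega) (by omega) (by omega)
      rwa [show M1 + (r + 1) = M1 + r + 1 by omega] at this

private lemma phase1 [NeZero N] [NeZero M] (hN : 5 ≤ N) (hM : 5 ≤ M)
    {p1 p2 p3 p4 : ℝ} (hp12 : p2 < p1) (hp : p3 + 3 * p4 < 2 * p1 + 2 * p2)
    (i0 : ZMod N) (j0 : ZMod M) (W : Set (Node N M)) (N1 M1 : ℕ)
    (hWsub : ∀ v ∈ W, (v.1 - i0).val < N1 ∧ (v.2 - j0).val < M1)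
    (hN1 : 2 ≤ N1) (hM1 : 2 ≤ M1) (hM1M : M1 ≤ M)
    (hMpar : (M - M1) % 2 = 0 ∨ 3 ≤ M - M1) :
    ∀ n r l, N1 + r + l ≤ N → ((N - N1 - r - l) % 2 = 0 ∨ 3 ≤ N - N1 - r - l) →
      n = (N - N1 - r - l + 1) / 2 →
      ReachableWithinW p1 p2 p3 p4 W {fun _ => Strat.C}
        (CfgR i0 j0 (N1 + r) (N - l) M1 M) (n + (M - M1 + 1) / 2) := by
  intro n
  induction n with
  | zero =>
    intro r l hsum hpar hn
    have h0 : N1 + r + l = N := by omega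
    rw [CfgR_rows_full (fun x hx => by omega)]
    have := phase2 hN hM hp12 hp i0 j0 W M1 (fun v hv => (hWsub v hv).2) hM1
      ((M - M1 + 1) / 2) 0 0 (by omega) (by omega) (by omega)
    rw [show M1 + 0 = M1 by omega, show M - 0 = M by omega] at this
    simpa using this
  | succ n ih =>
    intro r l hsum hpar hn
    rw [show n + 1 + (M - M1 + 1) / 2 = (n + (M - M1 + 1) / 2) + 1 by omega]
    by_cases h2 : (N - N1 - r - l) % 2 = 0
    · have hg2 : 2 ≤ N - N1 - r - l := by omega
      obtain ⟨c, hc, hFW⟩ := step1 hN hM hp12 hp i0 j0 W N1 M1 hWsub hN1 hM1 hM1M r l 1 1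
        (le_refl 1) (le_refl 1) (by omega)
      refine reach_step c hc hFW ?_
      have := ih (r + 1) (l + 1) (by omega) (by omega) (by omega)
      rwa [show N1 + (r + 1) = N1 + r + 1 by omega] at this
    · have hg3 : 3 ≤ N - N1 - r - l := by omega
      obtain ⟨c, hc, hFW⟩ := step1 hN hM hp12 hp i0 j0 W N1 M1 hWsub hN1 hM1 hM1M r l 1 0
        (le_refl 1) (by omega) (by omega)
      rw [show l + 0 = l by omega] at hFW
      refine reach_step c hc hFW ?_
      have := ih (r + 1) l (by omega) (by omega) (by omega)
      rwa [show N1 + (r + 1) = N1 + r + 1 by omega] at this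

end Aux5

/-- with `N, M ≥ 5`, a rectangular `N₁ × M₁` frozen-cooperation
set `W`, and the stated payoff conditions, the all-cooperation configuration is
reachable from `S*` under the `W`-frozen CEG within
`⌈(N − N₁)/2⌉ + ⌈(M − M₁)/2⌉` steps. -/
theorem frozen_rect_reachable_coop {N M : ℕ} (hN : 5 ≤ N) (hM : 5 ≤ M)
    (N1 M1 : ℕ)
    (hN1 : (2 ≤ N1 ∧ N1 + 3 ≤ N) ∨ N1 = N)
    (hM1 : (2 ≤ M1 ∧ M1 + 3 ≤ M) ∨ M1 = M)
    (i0 : ZMod N) (j0 : ZMod M)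
    (W : Set (Node N M))
    (hW : W = {w : Node N M |
      ∃ a < N1, ∃ b < M1, w = (i0 + (a : ZMod N), j0 + (b : ZMod M))})
    (p1 p2 p3 p4 : ℝ)
    (hcase : (p3 > p1 ∧ p1 > p4 ∧ p4 > p2 ∧ 2 * p1 + 2 * p2 > p3 + 3 * p4) ∨
      (p3 > p1 ∧ p1 > p2 ∧ p2 > p4 ∧ 2 * p3 + 2 * p4 > 2 * p1 + 2 * p2 ∧
        2 * p1 + 2 * p2 > p3 + 3 * p4 ∧ p3 + 3 * p4 > 4 * p2))
    (Sstar : Config N M)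
    (hSstarC : ∀ v ∈ W, Sstar v = Strat.C) (hSstarD : ∀ v ∉ W, Sstar v = Strat.D) :
    ReachableWithinW p1 p2 p3 p4 W ({fun _ => Strat.C} : Set (Config N M)) Sstar
      ((N - N1 + 1) / 2 + (M - M1 + 1) / 2) := by
  haveI : NeZero N := ⟨by omega⟩
  haveI : NeZero M := ⟨by omega⟩
  obtain ⟨hp12, hp⟩ : p2 < p1 ∧ p3 + 3 * p4 < 2 * p1 + 2 * p2 := by
    rcases hcase with ⟨h1, h2, h3, h4⟩ | ⟨h1, h2, h3, h4, h5, h6⟩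
    · exact ⟨lt_trans h3 h2, h4⟩
    · exact ⟨h2, h5⟩
  have hN1' : 2 ≤ N1 := by rcases hN1 with ⟨h, _⟩ | h <;> omega
  have hM1' : 2 ≤ M1 := by rcases hM1 with ⟨h, _⟩ | h <;> omega
  have hNpar : (N - N1) % 2 = 0 ∨ 3 ≤ N - N1 := by
    rcases hN1 with ⟨_, h⟩ | h
    · right; omega
    · left; omega
  have hMpar : (M - M1) % 2 = 0 ∨ 3 ≤ M - M1 := by
    rcases hM1 with ⟨_, h⟩ | h
    · right; omega
    · left; omega
  have hN1N : N1 ≤ N := by rcases hN1 with ⟨_, h⟩ | h <;> omega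
  have hM1M : M1 ≤ M := by rcases hM1 with ⟨_, h⟩ | h <;> omega
  have hWc : ∀ v : Node N M, v ∈ W ↔ ((v.1 - i0).val < N1 ∧ (v.2 - j0).val < M1) := by
    intro v
    rw [hW]
    constructor
    · rintro ⟨a, ha, b, hb, rfl⟩
      constructor
      · show ((i0 + (a : ZMod N)) - i0).val < N1
        rw [add_sub_cancel_left, ZMod.val_natCast_of_lt (by omega)]
        exact ha
      · show ((j0 + (b : ZMod M)) - j0).val < M1
        rw [add_sub_cancel_left, ZMod.val_natCast_of_lt (by omega)]
        exact hb
    · rintro ⟨hx, hy⟩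
      refine ⟨(v.1 - i0).val, hx, (v.2 - j0).val, hy, ?_⟩
      have e1 : (((v.1 - i0).val : ℕ) : ZMod N) = v.1 - i0 := by
        rw [ZMod.natCast_val, ZMod.cast_id]
      have e2 : (((v.2 - j0).val : ℕ) : ZMod M) = v.2 - j0 := by
        rw [ZMod.natCast_val, ZMod.cast_id]
      rw [e1, e2, show i0 + (v.1 - i0) = v.1 by ring, show j0 + (v.2 - j0) = v.2 by ring]
  have hS0 : Sstar = CfgR i0 j0 N1 N M1 M := by
    funext v
    by_cases hv : v ∈ W
    · rw [hSstarC v hv]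
      obtain ⟨hx, hy⟩ := (hWc v).mp hv
      exact (CfgR_eq_C.mpr ⟨Or.inl hx, Or.inl hy⟩).symm
    · rw [hSstarD v hv]
      refine (CfgR_eq_D.mpr fun hh => hv ((hWc v).mpr ⟨?_, ?_⟩)).symm
      · rcases hh.1 with h | h
        · exact h
        · exact absurd h (by have := ZMod.val_lt (v.1 - i0); omega)
      · rcases hh.2 with h | h
        · exact h
        · exact absurd h (by have := ZMod.val_lt (v.2 - j0); omega)
  rw [hS0]
  have := phase1 hN hM hp12 hp i0 j0 W N1 M1 (fun v hv => (hWc v).mp hv)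
    hN1' hM1' hM1M hMpar ((N - N1 + 1) / 2) 0 0 (by omega) (by omega) (by omega)
  rwa [show N1 + 0 = N1 by omega, show N - 0 = N by omega] at this

end EvolGame
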